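/- Let n ≥ 3 and let a = (a₁,…,aₙ) be a nondecreasing tuple of integers with each aᵢ ≥ 3, with combinatorial curvature Φ(a) = 1 − n/2 + Σᵢ₌₁ⁿ 1/aᵢ. If the largest entry satisfies k := aₙ ≥ 43 and Φ(a) ≥ 0, then a is one of (3,3,k), (3,4,k), (3,5,k), (3,6,k), (4,4,k), (3,3,3,k), and in every case Φ(a) ≥ 1/k. -/

import Mathlib

/-- The combinatorial curvature of a vertex pattern, given as the list of
degrees of the incident faces: `Φ(a) = 1 - n/2 + ∑ i, 1/aᵢ`. -/
def curv (l : List ℕ) : ℚ :=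
  1 - (l.length : ℚ) / 2 + (l.map fun x => (1 : ℚ) / x).sum

lemma curv_eq (l : List ℕ) :
    curv l = 1 - (l.length : ℚ) / 2 + (l.map fun x : ℕ => (1:ℚ)/(x:ℚ)).sum := by
  unfold curv
  congr 2
  induction l with
  | nil => rfl
  | cons a t ih => simp_all [List.map_cons]

lemma inv_le_aux {x m : ℕ} (hm : 0 < m) (h : m ≤ x) : (1:ℚ)/x ≤ 1/m := by
  apply one_div_le_one_div_of_le
  · exact_mod_cast hm
  · exact_mod_cast h

lemma sum_inv_le (l : List ℕ) (h : ∀ x ∈ l, 3 ≤ x) :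
    (l.map fun x : ℕ => (1 : ℚ) / (x:ℚ)).sum ≤ (l.length : ℚ) / 3 := by
  induction l with
  | nil => simp
  | cons a t ih =>
    simp only [List.map_cons, List.sum_cons, List.length_cons]
    have h1 : (1:ℚ)/a ≤ 1/3 := inv_le_aux (by norm_num) (h a (by simp))
    have h2 := ih (fun x hx => h x (by simp [hx]))
    have hcast : ((t.length + 1 : ℕ) : ℚ) = (t.length : ℚ) + 1 := by push_cast; ring
    rw [hcast]
    linarith

/-- Arithmetic core of Lemma 2.2: if a vertex pattern (nondecreasing, length `≥ 3`,
entries `≥ 3`) has largest entry `k = aₙ ≥ 43` and nonnegative curvature, then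
the pattern is one of `(3,3,k), (3,4,k), (3,5,k), (3,6,k), (4,4,k), (3,3,3,k)`,
and in every case its curvature is at least `1/k`. -/
theorem pattern_large_face_classification (l : List ℕ) (hlen : 3 ≤ l.length)
    (hsort : l.Pairwise (· ≤ ·)) (hge : ∀ x ∈ l, 3 ≤ x)
    (hk : 43 ≤ l.getLast!) (hnonneg : 0 ≤ curv l) :
    (l = [3, 3, l.getLast!] ∨ l = [3, 4, l.getLast!] ∨ l = [3, 5, l.getLast!] ∨
      l = [3, 6, l.getLast!] ∨ l = [4, 4, l.getLast!] ∨ l = [3, 3, 3, l.getLast!]) ∧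
    1 / (l.getLast! : ℚ) ≤ curv l := by
  rw [curv_eq] at hnonneg
  -- length bound
  have hne : l ≠ [] := by rintro rfl; simp at hlen
  have hgl : l.getLast! = l.getLast hne := by
    rcases l with _ | ⟨a, t⟩
    · exact absurd rfl hne
    · rfl
  have hsum : (l.map fun x : ℕ => (1 : ℚ) / (x:ℚ)).sum ≤ ((l.length : ℚ) - 1) / 3 + 1/43 := by
    have hdec := List.dropLast_append_getLast hne
    have h1 : (l.dropLast.map fun x : ℕ => (1 : ℚ) / (x:ℚ)).sum ≤ (l.dropLast.length : ℚ) / 3 :=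
      sum_inv_le _ (fun x hx => hge x (List.dropLast_subset l hx))
    have h2 : (1:ℚ)/(l.getLast hne) ≤ 1/43 := inv_le_aux (by norm_num) (hgl ▸ hk)
    calc (l.map fun x : ℕ => (1 : ℚ) / (x:ℚ)).sum
        = ((l.dropLast ++ [l.getLast hne]).map fun x : ℕ => (1 : ℚ) / (x:ℚ)).sum := by rw [hdec]
      _ = (l.dropLast.map fun x : ℕ => (1 : ℚ) / (x:ℚ)).sum + 1/(l.getLast hne) := by
          simp [List.map_append]
      _ ≤ (l.dropLast.length : ℚ) / 3 + 1/43 := by linarith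
      _ = ((l.length : ℚ) - 1) / 3 + 1/43 := by
          rw [List.length_dropLast, Nat.cast_sub (by omega)]
          norm_num
  have hlen4 : l.length ≤ 4 := by
    by_contra hc
    push_neg at hc
    have h5 : (5:ℚ) ≤ (l.length : ℚ) := by exact_mod_cast hc
    linarith
  clear hsum hgl hne
  -- destructure
  rcases l with _ | ⟨a, _ | ⟨b, _ | ⟨c, rest⟩⟩⟩
  · simp at hlen
  · simp at hlen
  · simp at hlen
  rcases rest with _ | ⟨d, rest2⟩
  · -- l = [a, b, c]
    clear hlen hlen4
    rw [List.pairwise_cons, List.pairwise_cons] at hsort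
    obtain ⟨ha, hb, -⟩ := hsort
    have hab : a ≤ b := ha b (by simp)
    have hbc : b ≤ c := hb c (by simp)
    have ha3 : 3 ≤ a := hge a (by simp)
    have hc43 : 43 ≤ c := by simpa [List.getLast!_cons_eq_getLastD, List.getLastD] using hk
    rw [show ([a,b,c] : List ℕ).getLast! = c from rfl] at hk ⊢
    have hc0 : (1:ℚ)/c ≤ 1/43 := inv_le_aux (by norm_num) hc43
    rw [curv_eq]
    simp only [List.length_cons, List.length_nil, List.map_cons, List.map_nil,
      List.sum_cons, List.sum_nil] at hnonneg ⊢
    have ha4 : a ≤ 4 := by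
      by_contra h
      push_neg at h
      have h1 : (1:ℚ)/a ≤ 1/5 := inv_le_aux (by norm_num) h
      have h2 : (1:ℚ)/b ≤ 1/5 := inv_le_aux (by norm_num) (le_trans h hab)
      simp only [one_div] at h1 h2 hc0
      norm_num at hnonneg
      linarith
    have hb6 : b ≤ 6 := by
      by_contra h
      push_neg at h
      have h1 : (1:ℚ)/a ≤ 1/3 := inv_le_aux (by norm_num) ha3
      have h2 : (1:ℚ)/b ≤ 1/7 := inv_le_aux (by norm_num) h
      simp only [one_div] at h1 h2 hc0
      norm_num at hnonneg
      linarith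
    have hb3 : 3 ≤ b := le_trans ha3 hab
    have hcq : (43:ℚ) ≤ (c:ℚ) := by exact_mod_cast hc43
    have hcpos : (0:ℚ) < c := by linarith
    simp only [one_div] at hc0
    interval_cases a <;> interval_cases b <;>
      [skip; skip; skip; skip; skip; skip; skip] <;>
      norm_num at hnonneg ⊢ <;>
      linarith
  · -- l = [a, b, c, d, rest2] with rest2 = []
    have hr2 : rest2 = [] := by
      simp only [List.length_cons] at hlen4
      exact List.eq_nil_of_length_eq_zero (by omega)
    subst hr2
    clear hlen hlen4
    rw [List.pairwise_cons, List.pairwise_cons, List.pairwise_cons] at hsort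
    obtain ⟨ha, hb, hc, -⟩ := hsort
    have hab : a ≤ b := ha b (by simp)
    have hbc : b ≤ c := hb c (by simp)
    have hcd : c ≤ d := hc d (by simp)
    have ha3 : 3 ≤ a := hge a (by simp)
    have hb3 : 3 ≤ b := le_trans ha3 hab
    have hc3 : 3 ≤ c := le_trans hb3 hbc
    have hd43 : 43 ≤ d := by simpa [List.getLast!_cons_eq_getLastD, List.getLastD] using hk
    rw [show ([a,b,c,d] : List ℕ).getLast! = d from rfl] at hk ⊢
    have hd0 : (1:ℚ)/d ≤ 1/43 := inv_le_aux (by norm_num) hd43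
    rw [curv_eq]
    simp only [List.length_cons, List.length_nil, List.map_cons, List.map_nil,
      List.sum_cons, List.sum_nil] at hnonneg ⊢
    have hc3' : c ≤ 3 := by
      by_contra h
      push_neg at h
      have h1 : (1:ℚ)/a ≤ 1/3 := inv_le_aux (by norm_num) ha3
      have h2 : (1:ℚ)/b ≤ 1/3 := inv_le_aux (by norm_num) hb3
      have h3 : (1:ℚ)/c ≤ 1/4 := inv_le_aux (by norm_num) h
      simp only [one_div] at h1 h2 h3 hd0
      norm_num at hnonneg
      linarith
    have hceq : c = 3 := le_antisymm hc3' hc3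
    have hbeq : b = 3 := le_antisymm (hceq ▸ hbc) hb3
    have haeq : a = 3 := le_antisymm (hbeq ▸ hab) ha3
    subst haeq hbeq hceq
    refine ⟨by norm_num, ?_⟩
    simp only [one_div] at hd0 ⊢
    norm_num
    linarith
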